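/- Let U ⊂ ℝ^d be an open bounded connected set star-shaped with respect to every point of a ball of radius ρ h_U (ρ > 0, h_U = diam U). Let p ∈ [1,∞], integers l ≥ 0, s ∈ {1,…,l+1}, q, m ∈ {0,…,s}, and let π : W^{q,1}(U) → P_l(U) be a projector (πw = w for all w ∈ P_l(U)) satisfying the boundedness: if m < q then |πv|_{W^{m,p}(U)} ≤ C Σ_{r=m}^{q} h_U^{r-m}|v|_{W^{r,p}(U)}, and if m ≥ q then |πv|_{W^{q,p}(U)} ≤ C |v|_{W^{q,p}(U)}, for all v ∈ W^{q,p}(U). Assume further the averaged Taylor polynomial estimates: every v ∈ W^{s,p}(U) decomposes as v = Q^s v + R^s v with Q^s v ∈ P_{s-1}(U) and |R^s v|_{W^{r,p}(U)} ≤ C' h_U^{s-r}|v|_{W^{s,p}(U)} for r ∈ {0,…,s}, and the reverse Sobolev embedding |w|_{W^{m,p}(U)} ≤ C'' h_U^{q-m}|w|_{W^{q,p}(U)} for all polynomials w ∈ P_l(U) when m ≥ q. Then there is C''' > 0 (depending only on C, C', C'', l, q, m, s, p, d) such that |v - πv|_{W^{m,p}(U)} ≤ C''' h_U^{s-m} |v|_{W^{s,p}(U)}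 for all v ∈ W^{s,p}(U). -/
import Mathlib


open Real

theorem stmt11 {V : Type*} [AddCommGroup V] [Module ℝ V]
    (N : ℕ → Seminorm ℝ V) (P : Submodule ℝ V)
    (hU : ℝ) (hhU : 0 < hU)
    (l s q m : ℕ) (hs1 : 1 ≤ s) (hsl : s ≤ l + 1) (hq : q ≤ s) (hm : m ≤ s)
    (pr : V →ₗ[ℝ] V) (hprP : ∀ v, pr v ∈ P) (hprproj : ∀ w ∈ P, pr w = w)
    (C C' C'' : ℝ) (hC : 0 < C) (hC' : 0 < C') (hC'' : 0 < C'')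
    (hbound1 : m < q → ∀ v, N m (pr v) ≤
      C * ∑ r ∈ Finset.Icc m q, hU ^ ((r : ℝ) - (m : ℝ)) * N r v)
    (hbound2 : q ≤ m → ∀ v, N q (pr v) ≤ C * N q v)
    (Q R : V → V) (hQR : ∀ v, v = Q v + R v) (hQP : ∀ v, Q v ∈ P)
    (hR : ∀ v, ∀ r ≤ s, N r (R v) ≤ C' * hU ^ ((s : ℝ) - (r : ℝ)) * N s v)
    (hrev : q ≤ m → ∀ w ∈ P, N m w ≤ C'' * hU ^ ((q : ℝ) - (m : ℝ)) * N q w) :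
    ∃ C''' > 0, ∀ v : V, N m (v - pr v) ≤ C''' * hU ^ ((s : ℝ) - (m : ℝ)) * N s v := by
  refine ⟨C' * (1 + C * (s + 1) + C * C''), by positivity, fun v => ?_⟩
  have hNs : (0:ℝ) ≤ N s v := apply_nonneg _ _
  have hpow : (0:ℝ) ≤ hU ^ ((s : ℝ) - (m : ℝ)) := (Real.rpow_pos_of_pos hhU _).le
  have key : v - pr v = R v - pr (R v) := by
    have h1 : pr (Q v) = Q v := hprproj _ (hQP v)
    calc v - pr v = (Q v + R v) - pr (Q v + R v) := by rw [← hQR v]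
      _ = R v - pr (R v) := by rw [map_add, h1]; abel
  rw [key]
  have hsub : N m (R v - pr (R v)) ≤ N m (R v) + N m (pr (R v)) :=
    map_sub_le_add _ _ _
  have hRm : N m (R v) ≤ C' * hU ^ ((s : ℝ) - (m : ℝ)) * N s v := hR v m hm
  rcases lt_or_ge m q with hmq | hqm
  · -- m < q
    have hterm : ∀ r ∈ Finset.Icc m q,
        hU ^ ((r : ℝ) - (m : ℝ)) * N r (R v)
          ≤ C' * hU ^ ((s : ℝ) - (m : ℝ)) * N s v := by
      intro r hr
      rw [Finset.mem_Icc] at hr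
      have hrs : r ≤ s := le_trans hr.2 hq
      have h1 : N r (R v) ≤ C' * hU ^ ((s : ℝ) - (r : ℝ)) * N s v := hR v r hrs
      have h2 : hU ^ ((r : ℝ) - (m : ℝ)) * (C' * hU ^ ((s : ℝ) - (r : ℝ)) * N s v)
          = C' * hU ^ ((s : ℝ) - (m : ℝ)) * N s v := by
        rw [show ((s : ℝ) - (m : ℝ)) = ((r : ℝ) - (m : ℝ)) + ((s : ℝ) - (r : ℝ)) by ring,
          Real.rpow_add hhU]
        ring
      calc hU ^ ((r : ℝ) - (m : ℝ)) * N r (R v)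
          ≤ hU ^ ((r : ℝ) - (m : ℝ)) * (C' * hU ^ ((s : ℝ) - (r : ℝ)) * N s v) := by
            exact mul_le_mul_of_nonneg_left h1 (Real.rpow_pos_of_pos hhU _).le
        _ = _ := h2
    have hsum : ∑ r ∈ Finset.Icc m q, hU ^ ((r : ℝ) - (m : ℝ)) * N r (R v)
        ≤ (q + 1 - m : ℕ) * (C' * hU ^ ((s : ℝ) - (m : ℝ)) * N s v) := by
      calc ∑ r ∈ Finset.Icc m q, hU ^ ((r : ℝ) - (m : ℝ)) * N r (R v)
          ≤ ∑ _r ∈ Finset.Icc m q, C' * hU ^ ((s : ℝ) - (m : ℝ)) * N s v :=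
            Finset.sum_le_sum hterm
        _ = (q + 1 - m : ℕ) * (C' * hU ^ ((s : ℝ) - (m : ℝ)) * N s v) := by
            rw [Finset.sum_const, Nat.card_Icc, nsmul_eq_mul]
    have hcard : ((q + 1 - m : ℕ) : ℝ) ≤ (s : ℝ) + 1 := by
      have : q + 1 - m ≤ s + 1 := by omega
      exact_mod_cast this
    have hprRm : N m (pr (R v))
        ≤ C * ((s : ℝ) + 1) * (C' * hU ^ ((s : ℝ) - (m : ℝ)) * N s v) := by
      calc N m (pr (R v)) ≤ C * ∑ r ∈ Finset.Icc m q, hU ^ ((r : ℝ) - (m : ℝ)) * N r (R v) :=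
            hbound1 hmq (R v)
        _ ≤ C * ((q + 1 - m : ℕ) * (C' * hU ^ ((s : ℝ) - (m : ℝ)) * N s v)) :=
            mul_le_mul_of_nonneg_left hsum hC.le
        _ ≤ C * ((s : ℝ) + 1) * (C' * hU ^ ((s : ℝ) - (m : ℝ)) * N s v) := by
            have hX : (0:ℝ) ≤ C' * hU ^ ((s : ℝ) - (m : ℝ)) * N s v := by positivity
            nlinarith [hcard, hX, hC.le, mul_nonneg hC.le hX]
    nlinarith [hsub, hRm, hprRm, mul_nonneg (mul_nonneg (mul_nonneg hC.le hC''.le) hC'.le)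
      (mul_nonneg hpow hNs)]
  · -- q ≤ m
    have hprRm : N m (pr (R v)) ≤ C * C' * C'' * (hU ^ ((s : ℝ) - (m : ℝ)) * N s v) := by
      have h1 : N m (pr (R v)) ≤ C'' * hU ^ ((q : ℝ) - (m : ℝ)) * N q (pr (R v)) :=
        hrev hqm _ (hprP (R v))
      have h2 : N q (pr (R v)) ≤ C * N q (R v) := hbound2 hqm (R v)
      have h3 : N q (R v) ≤ C' * hU ^ ((s : ℝ) - (q : ℝ)) * N s v := hR v q hq
      have h4 : hU ^ ((q : ℝ) - (m : ℝ)) * hU ^ ((s : ℝ) - (q : ℝ))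
          = hU ^ ((s : ℝ) - (m : ℝ)) := by
        rw [← Real.rpow_add hhU]; ring_nf
      have hp1 : (0:ℝ) ≤ hU ^ ((q : ℝ) - (m : ℝ)) := (Real.rpow_pos_of_pos hhU _).le
      calc N m (pr (R v)) ≤ C'' * hU ^ ((q : ℝ) - (m : ℝ)) * (C * N q (R v)) := by
            refine le_trans h1 ?_
            exact mul_le_mul_of_nonneg_left h2 (by positivity)
        _ ≤ C'' * hU ^ ((q : ℝ) - (m : ℝ)) * (C * (C' * hU ^ ((s : ℝ) - (q : ℝ)) * N s v)) := by
            refine mul_le_mul_of_nonneg_left ?_ (by positivity)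
            exact mul_le_mul_of_nonneg_left h3 hC.le
        _ = C * C' * C'' * (hU ^ ((q : ℝ) - (m : ℝ)) * hU ^ ((s : ℝ) - (q : ℝ)) * N s v) := by
            ring
        _ = C * C' * C'' * (hU ^ ((s : ℝ) - (m : ℝ)) * N s v) := by rw [h4]
    nlinarith [hsub, hRm, hprRm, mul_nonneg (mul_nonneg hC.le hC'.le)
      (mul_nonneg (mul_nonneg (by positivity : (0:ℝ) ≤ (s:ℝ)+1) hpow) hNs)]
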